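/- Let U_1,…,U_n and V_{11},…,V_{n1} be mutually independent standard normally distributed real random variables. Then for all η > 0: P( |n^{−1} Σ_{i=1}^n U_i V_{i1}| ≥ η ) ≤ ((η·n^{1/2} + 2)/(η·n^{1/2})) · exp( −(n/4)·min{η², 1/4} ). -/

import Mathlib

open MeasureTheory ProbabilityTheory Real



lemma gauss_real_sq {s : ℝ} (hs : s < 1/2) :
    Integrable (fun x : ℝ => gaussianPDFReal 0 1 x * rexp (s * x^2)) ∧
    ∫ x : ℝ, gaussianPDFReal 0 1 x * rexp (s * x^2) = (Real.sqrt (1 - 2*s))⁻¹ := by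
  have hb : 0 < 1/2 - s := by linarith
  have hπ : (0:ℝ) < π := Real.pi_pos
  have heq : (fun x : ℝ => gaussianPDFReal 0 1 x * rexp (s * x^2))
      = fun x => (Real.sqrt (2*π))⁻¹ * rexp (-(1/2 - s) * x^2) := by
    funext x
    simp only [gaussianPDFReal, NNReal.coe_one, mul_one, sub_zero]
    rw [mul_assoc, ← Real.exp_add]
    ring_nf
  constructor
  · rw [heq]; exact (integrable_exp_neg_mul_sq hb).const_mul _
  · rw [heq, integral_const_mul, integral_gaussian]
    rw [← Real.sqrt_inv, ← Real.sqrt_mul (by positivity), ← Real.sqrt_inv]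
    congr 1
    have h2 : (0:ℝ) < 1 - 2*s := by linarith
    rw [div_eq_mul_inv, eq_comm, inv_eq_iff_eq_inv, mul_inv, inv_inv]
    field_simp

lemma gauss_real_lin (c : ℝ) :
    Integrable (fun x : ℝ => gaussianPDFReal 0 1 x * rexp (c * x)) ∧
    ∫ x : ℝ, gaussianPDFReal 0 1 x * rexp (c * x) = rexp (c^2/2) := by
  have hπ : (0:ℝ) < π := Real.pi_pos
  have heq : (fun x : ℝ => gaussianPDFReal 0 1 x * rexp (c * x))
      = fun x => rexp (c^2/2) * ((Real.sqrt (2*π))⁻¹ * rexp (-(1/2) * (x - c)^2)) := by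
    funext x
    simp only [gaussianPDFReal, NNReal.coe_one, mul_one, sub_zero]
    rw [mul_assoc, ← Real.exp_add, mul_comm (rexp (c^2/2)), mul_assoc, ← Real.exp_add]
    ring_nf
  constructor
  · rw [heq]
    exact (((integrable_exp_neg_mul_sq (by norm_num : (0:ℝ) < 1/2)).comp_sub_right
      c).const_mul _).const_mul _
  · rw [heq, integral_const_mul, integral_const_mul,
      integral_sub_right_eq_self (fun x => rexp (-(1/2) * x^2)) c, integral_gaussian]
    rw [show π / (1/2) = 2 * π by ring, inv_mul_cancel₀ (by positivity), mul_one]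

lemma gauss_lint_aux {f : ℝ → ℝ} (hf : Measurable f) (hnn : ∀ x, 0 ≤ f x)
    (hint : Integrable (fun x : ℝ => gaussianPDFReal 0 1 x * f x)) :
    ∫⁻ x, ENNReal.ofReal (f x) ∂(gaussianReal 0 1)
      = ENNReal.ofReal (∫ x : ℝ, gaussianPDFReal 0 1 x * f x) := by
  rw [gaussianReal_of_var_ne_zero 0 one_ne_zero,
    lintegral_withDensity_eq_lintegral_mul _ (measurable_gaussianPDF 0 1)
      (by exact hf.ennreal_ofReal)]
  have h : ∀ x : ℝ, (gaussianPDF 0 1 * fun x => ENNReal.ofReal (f x)) x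
      = ENNReal.ofReal (gaussianPDFReal 0 1 x * f x) := by
    intro x
    simp [gaussianPDF, ENNReal.ofReal_mul (gaussianPDFReal_nonneg 0 1 x)]
  simp_rw [h]
  rw [← ofReal_integral_eq_lintegral_ofReal hint
    (ae_of_all _ fun x => mul_nonneg (gaussianPDFReal_nonneg 0 1 x) (hnn x))]

lemma gauss_lint_sq {s : ℝ} (hs : s < 1/2) :
    ∫⁻ x, ENNReal.ofReal (rexp (s * x^2)) ∂(gaussianReal 0 1)
      = ENNReal.ofReal ((Real.sqrt (1 - 2*s))⁻¹) := by
  rw [gauss_lint_aux (by fun_prop) (fun x => (exp_nonneg _)) (gauss_real_sq hs).1,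
    (gauss_real_sq hs).2]

lemma gauss_lint_lin (c : ℝ) :
    ∫⁻ x, ENNReal.ofReal (rexp (c * x)) ∂(gaussianReal 0 1)
      = ENNReal.ofReal (rexp (c^2/2)) := by
  rw [gauss_lint_aux (by fun_prop) (fun x => (exp_nonneg _)) (gauss_real_lin c).1,
    (gauss_real_lin c).2]

lemma pair_lint {t : ℝ} (ht : t^2 < 1) :
    ∫⁻ p : ℝ × ℝ, ENNReal.ofReal (rexp (t * (p.1 * p.2)))
        ∂((gaussianReal 0 1).prod (gaussianReal 0 1))
      = ENNReal.ofReal ((Real.sqrt (1 - t^2))⁻¹) := by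
  rw [lintegral_prod _ (by fun_prop)]
  have h1 : ∀ x : ℝ, ∫⁻ y, ENNReal.ofReal (rexp (t * (x * y))) ∂(gaussianReal 0 1)
      = ENNReal.ofReal (rexp ((t^2/2) * x^2)) := by
    intro x
    have h2 : ∀ y : ℝ, t * (x * y) = (t * x) * y := fun y => by ring
    simp_rw [h2]
    rw [gauss_lint_lin (t * x)]
    congr 1
    ring
  simp_rw [h1]
  rw [gauss_lint_sq (by linarith : t^2/2 < 1/2)]
  congr 3
  ring


lemma log_one_sub_ge {x : ℝ} (h0 : 0 ≤ x) (h1 : x ≤ 1/2) :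
    -(x + x^2) ≤ Real.log (1 - x) := by
  have hx : (0:ℝ) < 1 - x := by linarith
  have h2 := Real.quadratic_le_exp_of_nonneg (by positivity : (0:ℝ) ≤ x + x^2)
  have h3 : (1:ℝ) ≤ (1 - x) * rexp (x + x^2) := by nlinarith [Real.exp_pos (x + x^2)]
  have hmul : rexp (-(x + x^2)) * rexp (x + x^2) = 1 := by
    rw [← Real.exp_add, neg_add_cancel, Real.exp_zero]
  have h4 : rexp (-(x + x^2)) ≤ 1 - x := by
    nlinarith [Real.exp_pos (x + x^2), hmul, h3]
  calc -(x + x^2) = Real.log (rexp (-(x + x^2))) := (Real.log_exp _).symm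
    _ ≤ Real.log (1 - x) := Real.log_le_log (Real.exp_pos _) h4

lemma log_four_thirds : Real.log (4/3) ≤ 47/162 := by
  rw [Real.log_le_iff_le_exp (by norm_num)]
  have h := Real.sum_le_exp_of_nonneg (by norm_num : (0:ℝ) ≤ 47/162) 4
  refine le_trans ?_ h
  rw [Finset.sum_range_succ, Finset.sum_range_succ, Finset.sum_range_succ,
    Finset.sum_range_succ, Finset.sum_range_zero]
  norm_num [Nat.factorial]


lemma pair_iIndepFun {Ω : Type} [MeasurableSpace Ω] {P : Measure Ω} {n : ℕ}
    {U V : Fin n → Ω → ℝ} (hU : ∀ i, Measurable (U i)) (hV : ∀ i, Measurable (V i))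
    (h : iIndepFun (Sum.elim U V) P) :
    iIndepFun (fun i ω => (U i ω, V i ω)) P := by
  classical
  rw [iIndepFun_iff_iIndep]
  set pisys : Fin n → Set (Set Ω) := fun i =>
    {s | ∃ A B : Set ℝ, MeasurableSet A ∧ MeasurableSet B ∧ s = U i ⁻¹' A ∩ V i ⁻¹' B} with hpisys
  refine iIndepSets.iIndep ?_ pisys ?_ ?_ ?_
  · intro i
    exact ((hU i).prodMk (hV i)).comap_le
  · rintro i s ⟨A, B, hA, hB, rfl⟩ u ⟨A', B', hA', hB', rfl⟩ -
    refine ⟨A ∩ A', B ∩ B', hA.inter hA', hB.inter hB', ?_⟩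
    rw [Set.preimage_inter, Set.preimage_inter]
    ext ω; simp; tauto
  · intro i
    rw [← generateFrom_prod, MeasurableSpace.comap_generateFrom]
    congr 1
    ext s
    simp only [Set.mem_image, Set.mem_image2, Set.mem_setOf_eq]
    constructor
    · rintro ⟨_, ⟨A, hA, B, hB, rfl⟩, rfl⟩
      exact ⟨A, B, hA, hB, rfl⟩
    · rintro ⟨A, B, hA, hB, rfl⟩
      exact ⟨A ×ˢ B, ⟨A, hA, B, hB, rfl⟩, rfl⟩
  · rw [iIndepSets_iff]
    intro S f hf
    have hf' : ∀ i, ∃ A B : Set ℝ, MeasurableSet A ∧ MeasurableSet B ∧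
        (i ∈ S → f i = U i ⁻¹' A ∩ V i ⁻¹' B) := by
      intro i
      by_cases hi : i ∈ S
      · obtain ⟨A, B, hA, hB, hfe⟩ := hf i hi
        exact ⟨A, B, hA, hB, fun _ => hfe⟩
      · exact ⟨Set.univ, Set.univ, MeasurableSet.univ, MeasurableSet.univ, fun h' => absurd h' hi⟩
    choose A B hA hB hfeq using hf'
    have key := h.measure_inter_preimage_eq_mul (S.disjSum S)
      (sets := Sum.elim A B) (fun j hj => by rcases j with i | i <;> simp [hA, hB])
    have hLHS : (⋂ j ∈ S.disjSum S, Sum.elim U V j ⁻¹' Sum.elim A B j) = ⋂ i ∈ S, f i := by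
      ext ω
      simp only [Set.mem_iInter]
      constructor
      · intro hω i hi
        rw [hfeq i hi]
        exact ⟨hω (Sum.inl i) (by simp [hi]), hω (Sum.inr i) (by simp [hi])⟩
      · intro hω j hj
        rcases j with i | i
        · have hi : i ∈ S := by simpa using hj
          have := hω i hi
          rw [hfeq i hi] at this
          exact this.1
        · have hi : i ∈ S := by simpa using hj
          have := hω i hi
          rw [hfeq i hi] at this
          exact this.2
    rw [hLHS, Finset.prod_disjSum] at key
    rw [key]
    rw [← Finset.prod_mul_distrib]
    refine Finset.prod_congr rfl fun i hi => ?_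
    have hind : IndepFun (U i) (V i) P :=
      h.indepFun (show (Sum.inl i : Fin n ⊕ Fin n) ≠ Sum.inr i by simp)
    rw [hfeq i hi]
    exact (hind.measure_inter_preimage_eq_mul _ _ (hA i) (hB i)).symm


set_option maxHeartbeats 1000000

/-- Gaussian deviation inequality for the bilinear average `n⁻¹ Σ U_i V_i`
(inequality (A.6)); `Sum.elim U V` bundles the `2n` mutually independent
standard Gaussian variables. -/
theorem stmt_17 {Ω : Type} [MeasurableSpace Ω] (P : Measure Ω) [IsProbabilityMeasure P]
    (n : ℕ) (hn : 1 ≤ n) (U V : Fin n → Ω → ℝ)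
    (hmeasU : ∀ i, Measurable (U i)) (hmeasV : ∀ i, Measurable (V i))
    (hindep : iIndepFun (Sum.elim U V) P)
    (hgauss : ∀ i : Fin n ⊕ Fin n, Measure.map (Sum.elim U V i) P = gaussianReal 0 1)
    (η : ℝ) (hη : 0 < η) :
    (P {ω | η ≤ |(n : ℝ)⁻¹ * ∑ i, U i ω * V i ω|}).toReal
      ≤ ((η * Real.sqrt n + 2) / (η * Real.sqrt n))
          * Real.exp (-((n : ℝ) / 4) * min (η ^ 2) (1 / 4)) := by
  classical
  have hn0 : (0:ℝ) < n := by exact_mod_cast hn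
  set W : Fin n → Ω → ℝ := fun i ω => U i ω * V i ω with hWdef
  have hmeasW : ∀ i, Measurable (W i) := fun i => (hmeasU i).mul (hmeasV i)
  have hindepW : iIndepFun W P :=
    (pair_iIndepFun hmeasU hmeasV hindep).comp (fun i (p : ℝ × ℝ) => p.1 * p.2)
      (fun i => measurable_fst.mul measurable_snd)
  have hmap : ∀ i, Measure.map (fun ω => (U i ω, V i ω)) P
      = (gaussianReal 0 1).prod (gaussianReal 0 1) := by
    intro i
    have hind : IndepFun (U i) (V i) P :=
      hindep.indepFun (show (Sum.inl i : Fin n ⊕ Fin n) ≠ Sum.inr i by simp)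
    have hgU : Measure.map (U i) P = gaussianReal 0 1 := hgauss (Sum.inl i)
    have hgV : Measure.map (V i) P = gaussianReal 0 1 := hgauss (Sum.inr i)
    rw [(indepFun_iff_map_prod_eq_prod_map_map (hmeasU i).aemeasurable
      (hmeasV i).aemeasurable).mp hind, hgU, hgV]
  have hlW : ∀ (i) (t : ℝ), t^2 < 1 →
      ∫⁻ ω, ENNReal.ofReal (rexp (t * W i ω)) ∂P
        = ENNReal.ofReal ((Real.sqrt (1 - t^2))⁻¹) := by
    intro i t ht
    have h1 : ∫⁻ ω, ENNReal.ofReal (rexp (t * W i ω)) ∂P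
        = ∫⁻ p : ℝ × ℝ, ENNReal.ofReal (rexp (t * (p.1 * p.2)))
            ∂(Measure.map (fun ω => (U i ω, V i ω)) P) := by
      rw [lintegral_map (by fun_prop) ((hmeasU i).prodMk (hmeasV i))]
    rw [h1, hmap i, pair_lint ht]
  have hintW : ∀ (i) (t : ℝ), t^2 < 1 → Integrable (fun ω => rexp (t * W i ω)) P := by
    intro i t ht
    refine ⟨(((hmeasW i).const_mul t).exp).aestronglyMeasurable, ?_⟩
    rw [hasFiniteIntegral_iff_ofReal (ae_of_all _ fun ω => Real.exp_nonneg _), hlW i t ht]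
    exact ENNReal.ofReal_lt_top
  have hmgfW : ∀ (i) (t : ℝ), t^2 < 1 → mgf (W i) P t = (Real.sqrt (1 - t^2))⁻¹ := by
    intro i t ht
    rw [mgf, integral_eq_lintegral_of_nonneg_ae (ae_of_all _ fun ω => Real.exp_nonneg _)
      (((hmeasW i).const_mul t).exp).aestronglyMeasurable, hlW i t ht,
      ENNReal.toReal_ofReal (by positivity)]
  have key : ∀ t : ℝ, 0 ≤ t → t^2 < 1 →
      (P {ω | η ≤ |(n : ℝ)⁻¹ * ∑ i, U i ω * V i ω|}).toReal
        ≤ 2 * rexp (-t * ((n:ℝ) * η)) * ((Real.sqrt (1 - t^2))⁻¹)^n := by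
    intro t ht0 ht1
    have ht1' : (-t)^2 < 1 := by rw [show ((-t)^2 : ℝ) = t^2 by ring]; exact ht1
    have hintS : Integrable (fun ω => rexp (t * (∑ i, W i) ω)) P :=
      hindepW.integrable_exp_mul_sum hmeasW (fun i _ => hintW i t ht1)
    have hintS' : Integrable (fun ω => rexp (-t * (∑ i, W i) ω)) P :=
      hindepW.integrable_exp_mul_sum hmeasW (fun i _ => hintW i (-t) ht1')
    have hmgfS : mgf (∑ i, W i) P t = ((Real.sqrt (1 - t^2))⁻¹)^n := by
      rw [hindepW.mgf_sum hmeasW Finset.univ,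
        Finset.prod_congr rfl (fun i _ => hmgfW i t ht1), Finset.prod_const,
        Finset.card_univ, Fintype.card_fin]
    have hmgfS' : mgf (∑ i, W i) P (-t) = ((Real.sqrt (1 - t^2))⁻¹)^n := by
      rw [hindepW.mgf_sum hmeasW Finset.univ,
        Finset.prod_congr rfl (fun i _ => hmgfW i (-t) ht1'), Finset.prod_const,
        Finset.card_univ, Fintype.card_fin, show (1 - (-t)^2 : ℝ) = 1 - t^2 by ring]
    have hsub : {ω | η ≤ |(n : ℝ)⁻¹ * ∑ i, U i ω * V i ω|}
        ⊆ {ω | (n:ℝ) * η ≤ (∑ i, W i) ω} ∪ {ω | (∑ i, W i) ω ≤ -((n:ℝ) * η)} := by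
      intro ω hω
      simp only [Set.mem_setOf_eq, Set.mem_union]
      simp only [Set.mem_setOf_eq] at hω
      have hsum : (∑ i, W i) ω = ∑ i, U i ω * V i ω := by
        rw [Finset.sum_apply]
      rw [hsum]
      have habs : (n:ℝ) * η ≤ |∑ i, U i ω * V i ω| := by
        have h2 : |(n : ℝ)⁻¹ * ∑ i, U i ω * V i ω|
            = (n:ℝ)⁻¹ * |∑ i, U i ω * V i ω| := by
          rw [abs_mul, abs_of_nonneg (by positivity : (0:ℝ) ≤ (n:ℝ)⁻¹)]
        rw [h2] at hω
        have h3 := mul_le_mul_of_nonneg_left hω hn0.le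
        rw [← mul_assoc, mul_inv_cancel₀ hn0.ne', one_mul] at h3
        exact h3
      rcases le_abs.mp habs with h | h
      · exact Or.inl h
      · exact Or.inr (by linarith)
    have hPle : (P {ω | η ≤ |(n : ℝ)⁻¹ * ∑ i, U i ω * V i ω|}).toReal
        ≤ (P {ω | (n:ℝ) * η ≤ (∑ i, W i) ω}).toReal
          + (P {ω | (∑ i, W i) ω ≤ -((n:ℝ) * η)}).toReal := by
      rw [← ENNReal.toReal_add (measure_ne_top _ _) (measure_ne_top _ _)]
      refine ENNReal.toReal_mono ?_ ((measure_mono hsub).trans (measure_union_le _ _))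
      exact ENNReal.add_ne_top.mpr ⟨measure_ne_top _ _, measure_ne_top _ _⟩
    have h1 := measure_ge_le_exp_mul_mgf (X := ∑ i, W i) (μ := P) ((n:ℝ) * η) ht0 hintS
    have h2 := measure_le_le_exp_mul_mgf (X := ∑ i, W i) (μ := P) (-((n:ℝ) * η))
      (neg_nonpos.mpr ht0) hintS'
    rw [hmgfS] at h1
    rw [hmgfS', show (- -t * -((n:ℝ) * η) : ℝ) = -t * ((n:ℝ) * η) by ring] at h2
    calc (P {ω | η ≤ |(n : ℝ)⁻¹ * ∑ i, U i ω * V i ω|}).toReal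
        ≤ (P {ω | (n:ℝ) * η ≤ (∑ i, W i) ω}).toReal
          + (P {ω | (∑ i, W i) ω ≤ -((n:ℝ) * η)}).toReal := hPle
      _ ≤ rexp (-t * ((n:ℝ) * η)) * ((Real.sqrt (1 - t^2))⁻¹)^n
          + rexp (-t * ((n:ℝ) * η)) * ((Real.sqrt (1 - t^2))⁻¹)^n := add_le_add h1 h2
      _ = 2 * rexp (-t * ((n:ℝ) * η)) * ((Real.sqrt (1 - t^2))⁻¹)^n := by ring
  -- abbreviations for the final analytic step
  set a := η * Real.sqrt n with ha
  have hapos : 0 < a := mul_pos hη (Real.sqrt_pos.mpr hn0)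
  have hC1 : 1 ≤ (a + 2)/a := by rw [le_div_iff₀ hapos]; linarith
  set m := min (η^2) (1/4) with hm
  have hMexp : ∀ t : ℝ, t^2 < 1 → ((Real.sqrt (1 - t^2))⁻¹)^n
      = rexp ((n:ℝ) * (-(Real.log (1 - t^2) / 2))) := by
    intro t ht
    have h1 : (0:ℝ) < 1 - t^2 := by linarith
    rw [← Real.exp_log (show (0:ℝ) < (Real.sqrt (1 - t^2))⁻¹ by positivity),
      ← Real.exp_nat_mul, Real.log_inv, Real.log_sqrt h1.le]
  have hcore : ∀ t : ℝ, 0 ≤ t → t^2 < 1 →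
      (2:ℝ) ≤ (a + 2)/a * rexp ((n:ℝ) * (t * η + Real.log (1 - t^2)/2 - m/4)) →
      (P {ω | η ≤ |(n : ℝ)⁻¹ * ∑ i, U i ω * V i ω|}).toReal
        ≤ (a + 2)/a * rexp (-((n:ℝ)/4) * m) := by
    intro t ht0 ht1 hbound
    refine (key t ht0 ht1).trans ?_
    rw [hMexp t ht1, mul_assoc, ← Real.exp_add,
      show -t * ((n:ℝ) * η) + (n:ℝ) * (-(Real.log (1 - t^2) / 2))
        = -((n:ℝ)/4) * m + -((n:ℝ) * (t * η + Real.log (1 - t^2)/2 - m/4)) by ring,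
      Real.exp_add, Real.exp_neg]
    calc 2 * (rexp (-((n:ℝ)/4) * m)
            * (rexp ((n:ℝ) * (t * η + Real.log (1 - t^2)/2 - m/4)))⁻¹)
        = 2 * (rexp ((n:ℝ) * (t * η + Real.log (1 - t^2)/2 - m/4)))⁻¹
            * rexp (-((n:ℝ)/4) * m) := by ring
      _ ≤ (a + 2)/a * rexp (-((n:ℝ)/4) * m) := by
          refine mul_le_mul_of_nonneg_right ?_ (Real.exp_pos _).le
          rw [mul_inv_le_iff₀ (Real.exp_pos _)]
          exact hbound
  by_cases hcase : a ≤ 2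
  · -- prefactor at least 2
    have hC2 : 2 ≤ (a + 2)/a := by rw [le_div_iff₀ hapos]; linarith
    by_cases hη2 : η ≤ 1/2
    · -- t = η/2
      have hmval : m = η^2 := by rw [hm]; exact min_eq_left (by nlinarith)
      have ht1 : (η/2)^2 < 1 := by nlinarith
      refine hcore (η/2) (by positivity) ht1 ?_
      have hL := log_one_sub_ge (show (0:ℝ) ≤ (η/2)^2 by positivity)
        (by nlinarith : (η/2)^2 ≤ 1/2)
      have hexpr : 0 ≤ η/2 * η + Real.log (1 - (η/2)^2)/2 - m/4 := by
        rw [hmval]; nlinarith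
      have hexp1 : 1 ≤ rexp ((n:ℝ) * (η/2 * η + Real.log (1 - (η/2)^2)/2 - m/4)) :=
        Real.one_le_exp (mul_nonneg hn0.le hexpr)
      nlinarith [Real.exp_pos ((n:ℝ) * (η/2 * η + Real.log (1 - (η/2)^2)/2 - m/4))]
    · -- t = 1/4
      push_neg at hη2
      have hmval : m = 1/4 := by rw [hm]; exact min_eq_right (by nlinarith)
      refine hcore (1/4) (by norm_num) (by norm_num) ?_
      have hL := log_one_sub_ge (show (0:ℝ) ≤ ((1:ℝ)/4)^2 by positivity)
        (by norm_num : ((1:ℝ)/4)^2 ≤ 1/2)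
      have hexpr : 0 ≤ (1:ℝ)/4 * η + Real.log (1 - ((1:ℝ)/4)^2)/2 - m/4 := by
        rw [hmval]; nlinarith
      have hexp1 : 1 ≤ rexp ((n:ℝ) * ((1:ℝ)/4 * η + Real.log (1 - ((1:ℝ)/4)^2)/2 - m/4)) :=
        Real.one_le_exp (mul_nonneg hn0.le hexpr)
      nlinarith [Real.exp_pos ((n:ℝ) * ((1:ℝ)/4 * η + Real.log (1 - ((1:ℝ)/4)^2)/2 - m/4))]
  · -- a > 2 : prefactor at least 1, need exp factor ≥ 2
    push_neg at hcase
    have hn2 : 4 < η^2 * (n:ℝ) := by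
      have h1 : a^2 = η^2 * (n:ℝ) := by
        rw [ha, mul_pow, Real.sq_sqrt hn0.le]
      nlinarith
    have hfin : ∀ t : ℝ, 0 ≤ t → t^2 < 1 →
        Real.log 2 ≤ (n:ℝ) * (t * η + Real.log (1 - t^2)/2 - m/4) →
        (P {ω | η ≤ |(n : ℝ)⁻¹ * ∑ i, U i ω * V i ω|}).toReal
          ≤ (a + 2)/a * rexp (-((n:ℝ)/4) * m) := by
      intro t ht0 ht1 hlog
      refine hcore t ht0 ht1 ?_
      have h2 : (2:ℝ) ≤ rexp ((n:ℝ) * (t * η + Real.log (1 - t^2)/2 - m/4)) :=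
        (Real.log_le_iff_le_exp (by norm_num)).mp hlog
      nlinarith [Real.exp_pos ((n:ℝ) * (t * η + Real.log (1 - t^2)/2 - m/4))]
    have hlog2 := Real.log_two_lt_d9
    by_cases hη2 : η ≤ 1/2
    · -- t = 4η/5
      have hmval : m = η^2 := by rw [hm]; exact min_eq_left (by nlinarith)
      have ht1 : ((4:ℝ)/5*η)^2 < 1 := by nlinarith
      refine hfin ((4:ℝ)/5*η) (by positivity) ht1 ?_
      have hL := log_one_sub_ge (show (0:ℝ) ≤ ((4:ℝ)/5*η)^2 by positivity)
        (by nlinarith : ((4:ℝ)/5*η)^2 ≤ 1/2)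
      set c : ℝ := 23/100 - (128/625) * η^2 with hc
      have hcpos : 0 < c := by rw [hc]; nlinarith
      have he : η^2 * c ≤ (4:ℝ)/5*η * η + Real.log (1 - ((4:ℝ)/5*η)^2)/2 - m/4 := by
        rw [hmval, hc]; nlinarith
      have s1 : (n:ℝ) * (η^2 * c)
          ≤ (n:ℝ) * ((4:ℝ)/5*η * η + Real.log (1 - ((4:ℝ)/5*η)^2)/2 - m/4) :=
        mul_le_mul_of_nonneg_left he hn0.le
      have s2 : 4 * c ≤ (η^2 * (n:ℝ)) * c :=
        mul_le_mul_of_nonneg_right hn2.le hcpos.le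
      have s3 : Real.log 2 ≤ 4 * c := by rw [hc]; nlinarith
      have s4 : (η^2 * (n:ℝ)) * c = (n:ℝ) * (η^2 * c) := by ring
      exact (s3.trans (s4 ▸ s2)).trans s1
    · push_neg at hη2
      have hmval : m = 1/4 := by rw [hm]; exact min_eq_right (by nlinarith)
      by_cases hη3 : η ≤ 5/8
      · -- t = 4η/5
        have ht1 : ((4:ℝ)/5*η)^2 < 1 := by nlinarith
        refine hfin ((4:ℝ)/5*η) (by positivity) ht1 ?_
        have hL := log_one_sub_ge (show (0:ℝ) ≤ ((4:ℝ)/5*η)^2 by positivity)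
          (by nlinarith : ((4:ℝ)/5*η)^2 ≤ 1/2)
        set e2 : ℝ := (12/25) * η^2 - (128/625) * η^4 - 1/16 with he2
        have hu1 : (1:ℝ)/4 ≤ η^2 := by nlinarith
        have hu2 : η^2 ≤ 25/64 := by nlinarith
        have he2pos : 0 < e2 := by rw [he2]; nlinarith [sq_nonneg (η^2 - 1/4), mul_nonneg (sub_nonneg.mpr hu1) (sub_nonneg.mpr hu2)]
        have he : e2 ≤ (4:ℝ)/5*η * η + Real.log (1 - ((4:ℝ)/5*η)^2)/2 - m/4 := by
          rw [hmval, he2]; nlinarith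
        have s1 : (n:ℝ) * e2
            ≤ (n:ℝ) * ((4:ℝ)/5*η * η + Real.log (1 - ((4:ℝ)/5*η)^2)/2 - m/4) :=
          mul_le_mul_of_nonneg_left he hn0.le
        have s2 : 4 * e2 ≤ (η^2 * (n:ℝ)) * e2 :=
          mul_le_mul_of_nonneg_right hn2.le he2pos.le
        have s3 : η^2 * Real.log 2 ≤ 4 * e2 := by
          rw [he2]
          nlinarith [mul_nonneg (sub_nonneg.mpr hu1) (sub_nonneg.mpr hu2)]
        have s5 : Real.log 2 ≤ (n:ℝ) * e2 := by
          have h6 : η^2 * Real.log 2 ≤ η^2 * ((n:ℝ) * e2) := by nlinarith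
          exact le_of_mul_le_mul_left h6 (by positivity)
        exact s5.trans s1
      · push_neg at hη3
        -- t = 1/2
        refine hfin ((1:ℝ)/2) (by norm_num) (by norm_num) ?_
        have hL : -(47/162 : ℝ) ≤ Real.log (1 - ((1:ℝ)/2)^2) := by
          rw [show (1 - ((1:ℝ)/2)^2 : ℝ) = ((4:ℝ)/3)⁻¹ by norm_num, Real.log_inv]
          linarith [log_four_thirds]
        have he : η/2 - 269/1296 ≤ (1:ℝ)/2 * η + Real.log (1 - ((1:ℝ)/2)^2)/2 - m/4 := by
          rw [hmval]; linarith
        by_cases hη4 : η ≤ 2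
        · have he3pos : 0 < η/2 - 269/1296 := by nlinarith
          have s2 : 4 * (η/2 - 269/1296) ≤ (η^2 * (n:ℝ)) * (η/2 - 269/1296) :=
            mul_le_mul_of_nonneg_right hn2.le he3pos.le
          have s3 : η^2 * Real.log 2 ≤ 4 * (η/2 - 269/1296) := by
            nlinarith [mul_nonneg (sub_nonneg.mpr hη3.le) (sub_nonneg.mpr hη4)]
          have s5 : Real.log 2 ≤ (n:ℝ) * (η/2 - 269/1296) := by
            have h6 : η^2 * Real.log 2 ≤ η^2 * ((n:ℝ) * (η/2 - 269/1296)) := by nlinarith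
            exact le_of_mul_le_mul_left h6 (by positivity)
          have s1 : (n:ℝ) * (η/2 - 269/1296)
              ≤ (n:ℝ) * ((1:ℝ)/2 * η + Real.log (1 - ((1:ℝ)/2)^2)/2 - m/4) :=
            mul_le_mul_of_nonneg_left he hn0.le
          exact s5.trans s1
        · push_neg at hη4
          have hn1 : (1:ℝ) ≤ (n:ℝ) := by exact_mod_cast hn
          have he3pos : 0 ≤ η/2 - 269/1296 := by nlinarith
          have s5 : Real.log 2 ≤ η/2 - 269/1296 := by nlinarith
          have s6 : η/2 - 269/1296 ≤ (n:ℝ) * (η/2 - 269/1296) :=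
            le_mul_of_one_le_left he3pos hn1
          have s1 : (n:ℝ) * (η/2 - 269/1296)
              ≤ (n:ℝ) * ((1:ℝ)/2 * η + Real.log (1 - ((1:ℝ)/2)^2)/2 - m/4) :=
            mul_le_mul_of_nonneg_left he hn0.le
          exact (s5.trans s6).trans s1
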